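/- For integers m ≥ 1 and n ≥ 2, the (m,n)-anacci constant Φ⁽ⁿ⁾(m) satisfies m + 1 - 1/(m+1) < Φ⁽ⁿ⁾(m) < m + 1. -/

import Mathlib

theorem stmt_13 (m n : ℕ) (hm : 1 ≤ m) (hn : 2 ≤ n)
    (L : ℝ) (hL : 0 < L)
    (hroot : L ^ n - (m : ℝ) * ∑ k ∈ Finset.range n, L ^ k = 0) :
    (m : ℝ) + 1 - 1 / ((m : ℝ) + 1) < L ∧ L < (m : ℝ) + 1 := by
  set M : ℝ := (m : ℝ) with hM
  have hm1 : (1 : ℝ) ≤ M := by simp only [hM]; exact_mod_cast hm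
  set S : ℝ := ∑ k ∈ Finset.range n, L ^ k with hS
  have hg : S * (L - 1) = L ^ n - 1 := geom_sum_mul L n
  -- S ≥ 1 + L
  have hsub1 : ({0, 1} : Finset ℕ) ⊆ Finset.range n := by
    intro x hx
    simp only [Finset.mem_insert, Finset.mem_singleton] at hx
    simp only [Finset.mem_range]; omega
  have hs1 : 1 + L ≤ S := by
    have h := Finset.sum_le_sum_of_subset_of_nonneg hsub1
      (fun i _ _ => by positivity : ∀ i ∈ Finset.range n, i ∉ ({0,1} : Finset ℕ) → 0 ≤ L ^ i)
    have : ∑ k ∈ ({0, 1} : Finset ℕ), L ^ k = 1 + L := by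
      rw [Finset.sum_pair (by norm_num)]; simp
    linarith [this ▸ h]
  -- S ≥ 1 + L^(n-1)
  have hsub2 : ({0, n - 1} : Finset ℕ) ⊆ Finset.range n := by
    intro x hx
    simp only [Finset.mem_insert, Finset.mem_singleton] at hx
    simp only [Finset.mem_range]; omega
  have hs2 : 1 + L ^ (n - 1) ≤ S := by
    have h := Finset.sum_le_sum_of_subset_of_nonneg hsub2
      (fun i _ _ => by positivity : ∀ i ∈ Finset.range n, i ∉ ({0, n-1} : Finset ℕ) → 0 ≤ L ^ i)
    have : ∑ k ∈ ({0, n - 1} : Finset ℕ), L ^ k = 1 + L ^ (n - 1) := by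
      rw [Finset.sum_pair (by omega)]; simp
    linarith [this ▸ h]
  have hpn : 0 < L ^ n := pow_pos hL n
  have hpn1 : 0 < L ^ (n - 1) := pow_pos hL (n - 1)
  -- key identity: L * L^n = (M+1) * L^n - M
  have hkey : L * L ^ n = (M + 1) * L ^ n - M := by
    linear_combination (L - 1) * hroot + M * hg
  -- L > m
  have hLn : L ^ n = L * L ^ (n - 1) := by
    rw [← pow_succ']
    congr 1
    omega
  have hLm : M < L := by
    nlinarith [hroot, hs2, hLn, hpn1, hm1]
  -- L^n > M * (M + 1)
  have hLow : M * (M + 1) < L ^ n := by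
    nlinarith [hroot, hs1, hLm, hm1]
  have hMpos : (0 : ℝ) < M + 1 := by linarith
  constructor
  · -- lower bound
    have h1 : (M + 1) ^ 2 - 1 < (M + 1) * L := by
      nlinarith [hkey, hLow, hpn, hMpos]
    rw [show M + 1 - 1 / (M + 1) = ((M + 1) ^ 2 - 1) / (M + 1) by
      field_simp, div_lt_iff₀ hMpos]
    linarith
  · -- upper bound
    nlinarith [hkey, hpn, hm1]
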